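/- (Monotonic policy improvement.) For any two policies π and π′, if E_{s ~ ν^{π′,μ}} E_{a ~ π′(s)} [A^π(s,a)] ≥ 0, then J(π′) ≥ J(π). -/

import Mathlib

open scoped BigOperators

section MDPDefs

variable {S A : Type*} [Fintype S] [Fintype A]

/-- Expectation of a real-valued function under a PMF on a finite type (a finite sum). -/
noncomputable def pmfExp {X : Type*} [Fintype X] (p : PMF X) (f : X → ℝ) : ℝ :=
  ∑ x, (p x).toReal * f x

/-- Time-`t` state distribution `d_t^{π,μ}`:
`d_0 = μ` and `d_{t+1}` is obtained by sampling `x ~ d_t`, `a ~ π x`, `s' ~ P x a`. -/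
noncomputable def stateDist (P : S → A → PMF S) (π : S → PMF A) (μ : PMF S) : ℕ → PMF S
  | 0 => μ
  | t + 1 => (stateDist P π μ t).bind fun x => (π x).bind fun a => P x a

/-- State value function `V^π(s) = Σ_t γ^t E_{x ~ d_t^{π, δ_s}} E_{a ~ π x}[r x a]`. -/
noncomputable def Vval (P : S → A → PMF S) (r : S → A → ℝ) (γ : ℝ) (π : S → PMF A) (s : S) : ℝ :=
  ∑' t : ℕ, γ ^ t * pmfExp (stateDist P π (PMF.pure s) t) fun x => pmfExp (π x) fun a => r x a

/-- Return from an initial distribution: `J(π) = E_{s~μ}[V^π(s)]`. -/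
noncomputable def Jret (P : S → A → PMF S) (r : S → A → ℝ) (γ : ℝ) (π : S → PMF A) (μ : PMF S) : ℝ :=
  pmfExp μ (Vval P r γ π)

/-- State-action value `Q^π(s,a) = r(s,a) + γ E_{s' ~ P s a}[V^π(s')]`. -/
noncomputable def Qval (P : S → A → PMF S) (r : S → A → ℝ) (γ : ℝ) (π : S → PMF A)
    (s : S) (a : A) : ℝ :=
  r s a + γ * pmfExp (P s a) (Vval P r γ π)

/-- Advantage `A^π(s,a) = Q^π(s,a) - V^π(s)`. -/
noncomputable def Adv (P : S → A → PMF S) (r : S → A → ℝ) (γ : ℝ) (π : S → PMF A)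
    (s : S) (a : A) : ℝ :=
  Qval P r γ π s a - Vval P r γ π s

/-- Discounted state-visitation distribution `ν^{π,μ}(s) = (1-γ) Σ_t γ^t d_t^{π,μ}(s)`. -/
noncomputable def visit (P : S → A → PMF S) (π : S → PMF A) (μ : PMF S) (γ : ℝ) (s : S) : ℝ :=
  (1 - γ) * ∑' t : ℕ, γ ^ t * (stateDist P π μ t s).toReal

/-- `ℓ¹` distance between two PMFs on a finite type. -/
noncomputable def l1Dist {X : Type*} [Fintype X] (p q : PMF X) : ℝ :=
  ∑ x, |(p x).toReal - (q x).toReal|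

/-- KL divergence `D_KL(p‖q) = Σ_{x : p x > 0} p x * log (p x / q x)` on a finite type. -/
noncomputable def pmfKL {X : Type*} [Fintype X] (p q : PMF X) : ℝ :=
  ∑ x, if p x = 0 then 0 else (p x).toReal * Real.log ((p x).toReal / (q x).toReal)

/-- Mixed behavior policy: teacher's action when the intervention indicator is on,
student's action otherwise. -/
noncomputable def mixPolicy {S A : Type*} (πt πs : S → PMF A) (T : S → Bool) (s : S) : PMF A :=
  if T s then πt s else πs s

/-- Finite-horizon value of a deterministic policy, defined recursively:
`V_0(s) = r s (σ s)` and `V_{k+1}(s) = r s (σ s) + γ E_{s' ~ P s (σ s)}[V_k s']`. -/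
noncomputable def Vfin (P : S → A → PMF S) (r : S → A → ℝ) (γ : ℝ) (σ : S → A) : ℕ → S → ℝ
  | 0, s => r s (σ s)
  | k + 1, s => r s (σ s) + γ * pmfExp (P s (σ s)) (Vfin P r γ σ k)

/-- Finite-horizon value of the switching (mixed) policy that at each step picks whichever of
the two deterministic policies gives the larger continuation value. -/
noncomputable def Wswitch (P : S → A → PMF S) (r : S → A → ℝ) (γ : ℝ)
    (πt πs : S → A) : ℕ → S → ℝ
  | 0, s => max (r s (πt s)) (r s (πs s))
  | k + 1, s =>
      max (r s (πt s) + γ * pmfExp (P s (πt s)) (Wswitch P r γ πt πs k))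
          (r s (πs s) + γ * pmfExp (P s (πs s)) (Wswitch P r γ πt πs k))

end MDPDefs

section Helpers

variable {S A : Type*} [Fintype S] [Fintype A]

lemma pmfExp_sum_toReal {X : Type*} [Fintype X] (p : PMF X) :
    ∑ x, (p x).toReal = 1 := by
  have h := p.tsum_coe
  rw [tsum_fintype] at h
  rw [← ENNReal.toReal_sum (fun x _ => PMF.apply_ne_top p x), h, ENNReal.toReal_one]

lemma pmfExp_abs_le {X : Type*} [Fintype X] (p : PMF X) (f : X → ℝ) :
    |pmfExp p f| ≤ ∑ x, |f x| := by
  unfold pmfExp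
  calc |∑ x, (p x).toReal * f x| ≤ ∑ x, |(p x).toReal * f x| := Finset.abs_sum_le_sum_abs _ _
    _ ≤ ∑ x, |f x| := by
        apply Finset.sum_le_sum; intro x _
        rw [abs_mul, abs_of_nonneg ENNReal.toReal_nonneg]
        have h1 : (p x).toReal ≤ 1 := by
          rw [← ENNReal.toReal_one]
          exact ENNReal.toReal_mono ENNReal.one_ne_top (p.coe_le_one x)
        nlinarith [abs_nonneg (f x)]

lemma summable_geo_pmfExp {γ : ℝ} (hγ0 : 0 ≤ γ) (hγ1 : γ < 1)
    (d : ℕ → PMF S) (g : S → ℝ) :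
    Summable (fun t => γ ^ t * pmfExp (d t) g) := by
  apply Summable.of_norm_bounded (g := fun t => γ ^ t * ∑ x, |g x|)
    ((summable_geometric_of_lt_one hγ0 hγ1).mul_right _)
  intro t
  rw [Real.norm_eq_abs, abs_mul, abs_of_nonneg (pow_nonneg hγ0 t)]
  exact mul_le_mul_of_nonneg_left (pmfExp_abs_le _ _) (pow_nonneg hγ0 t)

lemma pmfExp_pure {X : Type*} [Fintype X] [DecidableEq X] (s : X) (f : X → ℝ) :
    pmfExp (PMF.pure s) f = f s := by
  unfold pmfExp
  rw [Finset.sum_eq_single s]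
  · simp [PMF.pure_apply]
  · intro b _ hb; simp [PMF.pure_apply, hb]
  · simp

lemma pmfExp_bind {X Y : Type*} [Fintype X] [Fintype Y] (p : PMF X) (f : X → PMF Y)
    (g : Y → ℝ) :
    pmfExp (p.bind f) g = pmfExp p (fun x => pmfExp (f x) g) := by
  have key : ∀ y, ((p.bind f) y).toReal = ∑ x, (p x).toReal * (f x y).toReal := by
    intro y
    rw [PMF.bind_apply, tsum_fintype,
      ENNReal.toReal_sum (fun x _ => ENNReal.mul_ne_top (PMF.apply_ne_top p x)
        (PMF.apply_ne_top (f x) y))]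
    simp [ENNReal.toReal_mul]
  unfold pmfExp
  simp only [key, Finset.sum_mul, Finset.mul_sum]
  rw [Finset.sum_comm]
  apply Finset.sum_congr rfl; intro x _
  apply Finset.sum_congr rfl; intro y _
  ring

lemma pmfExp_add {X : Type*} [Fintype X] (p : PMF X) (f g : X → ℝ) :
    pmfExp p (fun x => f x + g x) = pmfExp p f + pmfExp p g := by
  simp [pmfExp, mul_add, Finset.sum_add_distrib]

lemma pmfExp_sub {X : Type*} [Fintype X] (p : PMF X) (f g : X → ℝ) :
    pmfExp p (fun x => f x - g x) = pmfExp p f - pmfExp p g := by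
  simp [pmfExp, mul_sub, Finset.sum_sub_distrib]

lemma pmfExp_mul_left {X : Type*} [Fintype X] (p : PMF X) (c : ℝ) (f : X → ℝ) :
    pmfExp p (fun x => c * f x) = c * pmfExp p f := by
  simp [pmfExp, Finset.mul_sum]; apply Finset.sum_congr rfl; intros; ring

lemma pmfExp_const {X : Type*} [Fintype X] (p : PMF X) (c : ℝ) :
    pmfExp p (fun _ => c) = c := by
  unfold pmfExp
  rw [← Finset.sum_mul, pmfExp_sum_toReal, one_mul]

lemma stateDist_bind (P : S → A → PMF S) (π : S → PMF A) (μ : PMF S) (t : ℕ) :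
    stateDist P π μ t = μ.bind (fun s => stateDist P π (PMF.pure s) t) := by
  induction t with
  | zero => simp [stateDist]
  | succ t ih =>
      simp only [stateDist]
      rw [ih, PMF.bind_bind]

lemma stateDist_shift (P : S → A → PMF S) (π : S → PMF A) (μ : PMF S) (t : ℕ) :
    stateDist P π μ (t + 1)
      = stateDist P π (μ.bind fun x => (π x).bind fun a => P x a) t := by
  induction t with
  | zero => simp [stateDist]
  | succ t ih =>
      simp only [stateDist] at ih ⊢
      rw [ih]

lemma tsum_pmfExp_eq (P : S → A → PMF S) (r : S → A → ℝ) {γ : ℝ}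
    (hγ0 : 0 ≤ γ) (hγ1 : γ < 1) (π : S → PMF A) (μ : PMF S) :
    ∑' t : ℕ, γ ^ t * pmfExp (stateDist P π μ t) (fun x => pmfExp (π x) fun a => r x a)
      = pmfExp μ (Vval P r γ π) := by
  set ρ : S → ℝ := fun x => pmfExp (π x) fun a => r x a with hρ
  have hsum : ∀ ν : PMF S, Summable fun t : ℕ => γ ^ t * pmfExp (stateDist P π ν t) ρ :=
    fun ν => summable_geo_pmfExp hγ0 hγ1 _ _
  calc ∑' t : ℕ, γ ^ t * pmfExp (stateDist P π μ t) ρ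
      = ∑' t : ℕ, γ ^ t * pmfExp μ (fun s => pmfExp (stateDist P π (PMF.pure s) t) ρ) := by
        congr 1; funext t
        rw [stateDist_bind, pmfExp_bind]
    _ = ∑' t : ℕ, ∑ s, (μ s).toReal * (γ ^ t * pmfExp (stateDist P π (PMF.pure s) t) ρ) := by
        congr 1; funext t
        simp only [pmfExp, Finset.mul_sum]
        apply Finset.sum_congr rfl; intros
        apply Finset.sum_congr rfl; intros; ring
    _ = ∑ s, ∑' t : ℕ, (μ s).toReal * (γ ^ t * pmfExp (stateDist P π (PMF.pure s) t) ρ) := by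
        exact Summable.tsum_finsetSum (fun s _ => (hsum (PMF.pure s)).mul_left _)
    _ = ∑ s, (μ s).toReal * Vval P r γ π s := by
        apply Finset.sum_congr rfl; intro s _
        rw [tsum_mul_left]; rfl
    _ = pmfExp μ (Vval P r γ π) := rfl

lemma Vval_bellman (P : S → A → PMF S) (r : S → A → ℝ) {γ : ℝ}
    (hγ0 : 0 ≤ γ) (hγ1 : γ < 1) (π : S → PMF A) (s : S) :
    Vval P r γ π s = (pmfExp (π s) fun a => r s a)
      + γ * pmfExp ((π s).bind fun a => P s a) (Vval P r γ π) := by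
  classical
  set ρ : S → ℝ := fun x => pmfExp (π x) fun a => r x a with hρ
  have hsum : ∀ ν : PMF S, Summable fun t : ℕ => γ ^ t * pmfExp (stateDist P π ν t) ρ :=
    fun ν => summable_geo_pmfExp hγ0 hγ1 _ _
  have h0 : Vval P r γ π s
      = γ ^ 0 * pmfExp (stateDist P π (PMF.pure s) 0) ρ
        + ∑' t : ℕ, γ ^ (t + 1) * pmfExp (stateDist P π (PMF.pure s) (t + 1)) ρ := by
    exact Summable.tsum_eq_zero_add (hsum (PMF.pure s))
  rw [h0]
  have h1 : (stateDist P π (PMF.pure s) 0) = PMF.pure s := rfl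
  rw [h1, pow_zero, one_mul, pmfExp_pure]
  congr 1
  have h2 : ∀ t : ℕ, stateDist P π (PMF.pure s) (t + 1)
      = stateDist P π ((π s).bind fun a => P s a) t := by
    intro t
    rw [stateDist_shift, PMF.pure_bind]
  calc ∑' t : ℕ, γ ^ (t + 1) * pmfExp (stateDist P π (PMF.pure s) (t + 1)) ρ
      = ∑' t : ℕ, γ * (γ ^ t * pmfExp (stateDist P π ((π s).bind fun a => P s a) t) ρ) := by
        congr 1; funext t; rw [h2 t, pow_succ]; ring
    _ = γ * pmfExp ((π s).bind fun a => P s a) (Vval P r γ π) := by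
        rw [tsum_mul_left, tsum_pmfExp_eq P r hγ0 hγ1]

lemma pmfExp_adv (P : S → A → PMF S) (r : S → A → ℝ) (γ : ℝ)
    (π π' : S → PMF A) (s : S) :
    pmfExp (π' s) (fun a => Adv P r γ π s a)
      = (pmfExp (π' s) fun a => r s a)
        + γ * pmfExp ((π' s).bind fun a => P s a) (Vval P r γ π)
        - Vval P r γ π s := by
  simp only [Adv, Qval]
  have h1 : pmfExp (π' s)
      (fun a => r s a + γ * pmfExp (P s a) (Vval P r γ π) - Vval P r γ π s)
      = pmfExp (π' s) (fun a => r s a)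
        + γ * pmfExp (π' s) (fun a => pmfExp (P s a) (Vval P r γ π))
        - Vval P r γ π s := by
    rw [pmfExp_sub, pmfExp_add, pmfExp_const, pmfExp_mul_left]
  rw [h1, pmfExp_bind]

end Helpers

/-- Monotonic policy improvement: if the visitation-weighted expected advantage of `π` under
`π'` is nonnegative, then `J(π') ≥ J(π)`. -/
theorem monotonic_improvement {S A : Type*} [Fintype S] [Nonempty S] [Fintype A] [Nonempty A]
    (P : S → A → PMF S) (r : S → A → ℝ) (γ : ℝ) (hγ0 : 0 ≤ γ) (hγ1 : γ < 1)
    (π π' : S → PMF A) (μ : PMF S)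
    (h : 0 ≤ ∑ s, visit P π' μ γ s * pmfExp (π' s) (fun a => Adv P r γ π s a)) :
    Jret P r γ π μ ≤ Jret P r γ π' μ := by
  classical
  set V : S → ℝ := Vval P r γ π with hV
  set F : S → ℝ := fun s => pmfExp (π' s) (fun a => Adv P r γ π s a) with hF
  set d : ℕ → PMF S := stateDist P π' μ with hd
  set ρ' : S → ℝ := fun x => pmfExp (π' x) fun a => r x a with hρ'
  have sρ : Summable (fun t => γ ^ t * pmfExp (d t) ρ') := summable_geo_pmfExp hγ0 hγ1 _ _
  have sV : Summable (fun t => γ ^ t * pmfExp (d t) V) := summable_geo_pmfExp hγ0 hγ1 _ _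
  have sF : Summable (fun t => γ ^ t * pmfExp (d t) F) := summable_geo_pmfExp hγ0 hγ1 _ _
  have hdshift : ∀ t, d (t + 1)
      = stateDist P π' (μ.bind fun x => (π' x).bind fun a => P x a) t := by
    intro t; rw [hd, stateDist_shift]
  have sVs : Summable (fun t => γ ^ (t + 1) * pmfExp (d (t + 1)) V) := by
    have e : (fun t => γ ^ (t + 1) * pmfExp (d (t + 1)) V)
        = fun t => γ * (γ ^ t
            * pmfExp (stateDist P π' (μ.bind fun x => (π' x).bind fun a => P x a) t) V) := by
      funext t; rw [hdshift t, pow_succ]; ring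
    rw [e]; exact (summable_geo_pmfExp hγ0 hγ1 _ _).mul_left γ
  have hbind : ∀ t, pmfExp (d (t + 1)) V
      = pmfExp (d t) (fun s => pmfExp ((π' s).bind fun a => P s a) V) := by
    intro t
    have : d (t + 1) = (d t).bind fun s => (π' s).bind fun a => P s a := rfl
    rw [this, pmfExp_bind]
  have key : ∀ t, γ ^ t * pmfExp (d t) F
      = γ ^ t * pmfExp (d t) ρ'
        + (γ ^ (t + 1) * pmfExp (d (t + 1)) V - γ ^ t * pmfExp (d t) V) := by
    intro t
    have e1 : F = fun s => ρ' s + γ * pmfExp ((π' s).bind fun a => P s a) V - V s := by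
      funext s; rw [hF]; exact pmfExp_adv P r γ π π' s
    have h1 : pmfExp (d t) F
        = pmfExp (d t) ρ' + γ * pmfExp (d (t + 1)) V - pmfExp (d t) V := by
      rw [e1, pmfExp_sub, pmfExp_add, pmfExp_mul_left, hbind t]
    rw [h1, pow_succ]; ring
  have hshiftsum : ∑' t : ℕ, γ ^ (t + 1) * pmfExp (d (t + 1)) V
      = (∑' t : ℕ, γ ^ t * pmfExp (d t) V) - pmfExp μ V := by
    have := Summable.tsum_eq_zero_add sV
    rw [this]
    have h0 : d 0 = μ := rfl
    rw [h0, pow_zero, one_mul]; ring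
  have hJ' : ∑' t : ℕ, γ ^ t * pmfExp (d t) ρ' = Jret P r γ π' μ := by
    rw [hd, hρ']
    exact tsum_pmfExp_eq P r hγ0 hγ1 π' μ
  have hts : ∑' t : ℕ, γ ^ t * pmfExp (d t) F
      = Jret P r γ π' μ - Jret P r γ π μ := by
    calc ∑' t : ℕ, γ ^ t * pmfExp (d t) F
        = ∑' t : ℕ, (γ ^ t * pmfExp (d t) ρ'
            + (γ ^ (t + 1) * pmfExp (d (t + 1)) V - γ ^ t * pmfExp (d t) V)) := by
          congr 1; funext t; exact key t
      _ = (∑' t : ℕ, γ ^ t * pmfExp (d t) ρ')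
            + ((∑' t : ℕ, γ ^ (t + 1) * pmfExp (d (t + 1)) V)
              - ∑' t : ℕ, γ ^ t * pmfExp (d t) V) := by
          rw [Summable.tsum_add sρ (sVs.sub sV), Summable.tsum_sub sVs sV]
      _ = Jret P r γ π' μ - Jret P r γ π μ := by
          rw [hJ', hshiftsum]
          have : Jret P r γ π μ = pmfExp μ V := rfl
          rw [this]; ring
  have hvisit : ∑ s, visit P π' μ γ s * F s
      = (1 - γ) * ∑' t : ℕ, γ ^ t * pmfExp (d t) F := by
    have ssum : ∀ s : S, Summable fun t : ℕ => γ ^ t * ((d t) s).toReal * F s := by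
      intro s
      apply Summable.of_norm_bounded (g := fun t => γ ^ t * |F s|)
        ((summable_geometric_of_lt_one hγ0 hγ1).mul_right _)
      intro t
      rw [Real.norm_eq_abs, abs_mul, abs_mul, abs_of_nonneg (pow_nonneg hγ0 t),
        abs_of_nonneg ENNReal.toReal_nonneg, mul_assoc]
      apply mul_le_mul_of_nonneg_left _ (pow_nonneg hγ0 t)
      have h1 : ((d t) s).toReal ≤ 1 := by
        rw [← ENNReal.toReal_one]
        exact ENNReal.toReal_mono ENNReal.one_ne_top ((d t).coe_le_one s)
      nlinarith [abs_nonneg (F s)]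
    calc ∑ s, visit P π' μ γ s * F s
        = ∑ s, (1 - γ) * ∑' t : ℕ, γ ^ t * ((d t) s).toReal * F s := by
          apply Finset.sum_congr rfl; intro s _
          rw [show visit P π' μ γ s
              = (1 - γ) * ∑' t : ℕ, γ ^ t * ((d t) s).toReal from rfl]
          rw [mul_assoc, ← tsum_mul_right]
      _ = (1 - γ) * ∑ s, ∑' t : ℕ, γ ^ t * ((d t) s).toReal * F s := by
          rw [Finset.mul_sum]
      _ = (1 - γ) * ∑' t : ℕ, ∑ s, γ ^ t * ((d t) s).toReal * F s := by
          rw [Summable.tsum_finsetSum (fun s _ => ssum s)]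
      _ = (1 - γ) * ∑' t : ℕ, γ ^ t * pmfExp (d t) F := by
          congr 1
          refine tsum_congr fun t => ?_
          rw [pmfExp, Finset.mul_sum]
          apply Finset.sum_congr rfl; intros; ring
  rw [hvisit, hts] at h
  nlinarith [h]
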